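/- Let (H,•,1,Δ,ε,T) be a Hopf algebra, ⇀: H⊗H→H a coalgebra morphism, ↼: H⊗H→H a linear map with ε(a↼b)=ε(a)ε(b), such that a•b=(a₁⇀b₁)•(a₂↼b₂). Then the following are equivalent: (i) ↼ is a coalgebra morphism, i.e. Δ(a↼b)=(a₁↼b₁)⊗(a₂↼b₂); (ii) (a₂↼b₂)⊗((a₁⇀b₁)•(a₃↼b₃)) = (a₁↼b₁)⊗(a₂•b₂); (iii) ((a₁⇀b₁)•(a₃↼b₃))⊗(a₂⇀b₂) = (a₁•b₁)⊗(a₂⇀b₂); (iv) (a₁⇀b₁)⊗(a₂↼b₂) = (a₂⇀b₂)⊗(a₁↼b₁). -/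

import Mathlib

open TensorProduct

noncomputable section

variable (k H : Type*) [Field k] [Ring H] [HopfAlgebra k H]

/-- Multiplication of `H` as a linear map. -/
def mu : H ⊗[k] H →ₗ[k] H := LinearMap.mul' k H
/-- Comultiplication. -/
def delta : H →ₗ[k] H ⊗[k] H := Coalgebra.comul
/-- Counit. -/
def eps : H →ₗ[k] k := Coalgebra.counit
/-- Flip `a⊗b ↦ b⊗a`. -/
def tau : H ⊗[k] H →ₗ[k] H ⊗[k] H := (TensorProduct.comm k H H).toLinearMap
/-- Associator. -/
def assocMap : (H ⊗[k] H) ⊗[k] H →ₗ[k] H ⊗[k] (H ⊗[k] H) :=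
  (TensorProduct.assoc k H H H).toLinearMap
/-- Inverse associator. -/
def assocInv : H ⊗[k] (H ⊗[k] H) →ₗ[k] (H ⊗[k] H) ⊗[k] H :=
  (TensorProduct.assoc k H H H).symm.toLinearMap
/-- The middle-four interchange `(a⊗b)⊗(c⊗d) ↦ (a⊗c)⊗(b⊗d)`. -/
def ttcMap : (H ⊗[k] H) ⊗[k] (H ⊗[k] H) →ₗ[k] (H ⊗[k] H) ⊗[k] (H ⊗[k] H) :=
  (TensorProduct.tensorTensorTensorComm k H H H H).toLinearMap
/-- `a⊗b ↦ (a₁⊗b₁)⊗(a₂⊗b₂)` (Sweedler notation). -/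
def dd : H ⊗[k] H →ₗ[k] (H ⊗[k] H) ⊗[k] (H ⊗[k] H) :=
  ttcMap k H ∘ₗ map (delta k H) (delta k H)
/-- `a⊗b ↦ ((a₁⊗b₁)⊗(a₂⊗b₂))⊗(a₃⊗b₃)`. -/
def ddd : H ⊗[k] H →ₗ[k] ((H ⊗[k] H) ⊗[k] (H ⊗[k] H)) ⊗[k] (H ⊗[k] H) :=
  map (dd k H) LinearMap.id ∘ₗ dd k H
/-- `a⊗b ↦ ε(a)ε(b)`. -/
def epseps : H ⊗[k] H →ₗ[k] k := LinearMap.mul' k k ∘ₗ map (eps k H) (eps k H)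
/-- `σ(a⊗b) = (a₁⇀b₁)⊗(a₂↼b₂)` attached to a pair of "actions". -/
def sig (l r : H ⊗[k] H →ₗ[k] H) : H ⊗[k] H →ₗ[k] H ⊗[k] H :=
  map l r ∘ₗ dd k H

/-- The antipode of `H`. -/
def anti : H →ₗ[k] H := HopfAlgebra.antipode k

/-- A matched pair of actions `(H,⇀,↼)` on the Hopf algebra `H` (Definition 2.1):
`l`, `r` are a left and a right action of `H` on itself making `H` a left and right
`H`-module coalgebra, satisfying (mp.1)–(mp.4) and the braided commutativity (★). -/
structure MatchedPairOfActions (l r : H ⊗[k] H →ₗ[k] H) : Prop where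
  one_act : ∀ b : H, l ((1 : H) ⊗ₜ[k] b) = b
  mul_act : ∀ a b c : H, l ((a * b) ⊗ₜ[k] c) = l (a ⊗ₜ[k] l (b ⊗ₜ[k] c))
  act_one : ∀ a : H, r (a ⊗ₜ[k] (1 : H)) = a
  act_mul : ∀ a b c : H, r (a ⊗ₜ[k] (b * c)) = r (r (a ⊗ₜ[k] b) ⊗ₜ[k] c)
  comul_l : delta k H ∘ₗ l = map l l ∘ₗ dd k H
  counit_l : eps k H ∘ₗ l = epseps k H
  comul_r : delta k H ∘ₗ r = map r r ∘ₗ dd k H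
  counit_r : eps k H ∘ₗ r = epseps k H
  mp1 : ∀ a : H, l (a ⊗ₜ[k] (1 : H)) = eps k H a • (1 : H)
  mp2 : ∀ b : H, r ((1 : H) ⊗ₜ[k] b) = eps k H b • (1 : H)
  mp3 : l ∘ₗ map LinearMap.id (mu k H) ∘ₗ assocMap k H
      = mu k H ∘ₗ map LinearMap.id l ∘ₗ assocMap k H ∘ₗ map (sig k H l r) LinearMap.id
  mp4 : r ∘ₗ map (mu k H) LinearMap.id
      = mu k H ∘ₗ map r LinearMap.id ∘ₗ assocInv k H ∘ₗ map LinearMap.id (sig k H l r) ∘ₗ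
          assocMap k H
  star : mu k H ∘ₗ sig k H l r = mu k H

/-- The second product `a·b := a₁•(T(a₂)⇀b)` attached to a left action `l = ⇀`. -/
def cdot (l : H ⊗[k] H →ₗ[k] H) : H ⊗[k] H →ₗ[k] H :=
  mu k H ∘ₗ map LinearMap.id l ∘ₗ assocMap k H ∘ₗ
    map (map LinearMap.id (anti k H) ∘ₗ delta k H) LinearMap.id

/-- The map `S(a) := a₁⇀T(a₂)` attached to a left action `l = ⇀`. -/
def Smap (l : H ⊗[k] H →ₗ[k] H) : H →ₗ[k] H :=
  l ∘ₗ map LinearMap.id (anti k H) ∘ₗ delta k H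

section AuxStruct

variable {k : Type*} {H : Type*} [Field k] [Ring H] [HopfAlgebra k H]

/-- Naturality of the middle-four interchange. -/
theorem ttc_nat {M₁ M₂ N₁ N₂ P₁ P₂ Q₁ Q₂ : Type*}
    [AddCommMonoid M₁] [AddCommMonoid M₂] [AddCommMonoid N₁] [AddCommMonoid N₂]
    [AddCommMonoid P₁] [AddCommMonoid P₂] [AddCommMonoid Q₁] [AddCommMonoid Q₂]
    [Module k M₁] [Module k M₂] [Module k N₁] [Module k N₂]
    [Module k P₁] [Module k P₂] [Module k Q₁] [Module k Q₂]
    (f : M₁ →ₗ[k] M₂) (g : N₁ →ₗ[k] N₂) (h : P₁ →ₗ[k] P₂) (j : Q₁ →ₗ[k] Q₂) :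
    (TensorProduct.tensorTensorTensorComm k M₂ N₂ P₂ Q₂).toLinearMap ∘ₗ
        map (map f g) (map h j)
      = map (map f h) (map g j) ∘ₗ
          (TensorProduct.tensorTensorTensorComm k M₁ N₁ P₁ Q₁).toLinearMap := by
  apply TensorProduct.ext_fourfold'
  intro w x y z
  simp

end AuxStruct
section AuxCR
variable {R : Type*} [CommSemiring R]

theorem cra {M N P Q : Type*} [AddCommMonoid M] [AddCommMonoid N] [AddCommMonoid P]
    [AddCommMonoid Q] [Module R M] [Module R N] [Module R P]
    [Module R Q] {f : P →ₗ[R] Q} {g : N →ₗ[R] P} {e : N →ₗ[R] Q}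
    (h : f ∘ₗ g = e) (rest : M →ₗ[R] N) : f ∘ₗ g ∘ₗ rest = e ∘ₗ rest := by
  rw [← LinearMap.comp_assoc, h]

theorem crb {M N P P' Q : Type*} [AddCommMonoid M] [AddCommMonoid N] [AddCommMonoid P]
    [AddCommMonoid P'] [AddCommMonoid Q] [Module R M] [Module R N] [Module R P] [Module R P']
    [Module R Q] {f : P →ₗ[R] Q} {g : N →ₗ[R] P} {f' : P' →ₗ[R] Q} {g' : N →ₗ[R] P'}
    (h : f ∘ₗ g = f' ∘ₗ g') (rest : M →ₗ[R] N) :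
    f ∘ₗ g ∘ₗ rest = f' ∘ₗ g' ∘ₗ rest := by
  rw [← LinearMap.comp_assoc, h, LinearMap.comp_assoc]
end AuxCR
section AuxStruct2

variable {k H : Type*} [Field k] [Ring H] [HopfAlgebra k H]

theorem splitL {M₁ M₂ M₃ N : Type*} [AddCommMonoid M₁] [AddCommMonoid M₂] [AddCommMonoid M₃]
    [AddCommMonoid N] [Module k M₁] [Module k M₂] [Module k M₃] [Module k N]
    (f₂ : M₂ →ₗ[k] M₃) (f₁ : M₁ →ₗ[k] M₂) :
    map (f₂ ∘ₗ f₁) (LinearMap.id : N →ₗ[k] N) = map f₂ LinearMap.id ∘ₗ map f₁ LinearMap.id := by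
  rw [← TensorProduct.map_comp, LinearMap.id_comp]

theorem splitR {M₁ M₂ M₃ N : Type*} [AddCommMonoid M₁] [AddCommMonoid M₂] [AddCommMonoid M₃]
    [AddCommMonoid N] [Module k M₁] [Module k M₂] [Module k M₃] [Module k N]
    (f₂ : M₂ →ₗ[k] M₃) (f₁ : M₁ →ₗ[k] M₂) :
    map (LinearMap.id : N →ₗ[k] N) (f₂ ∘ₗ f₁) = map LinearMap.id f₂ ∘ₗ map LinearMap.id f₁ := by
  rw [← TensorProduct.map_comp, LinearMap.id_comp]

theorem d3_eq :
    map LinearMap.id (delta k H) ∘ₗ delta k H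
      = (TensorProduct.assoc k H H H).toLinearMap ∘ₗ
          map (delta k H) LinearMap.id ∘ₗ delta k H := by
  rw [← LinearMap.comp_assoc]
  exact (Coalgebra.coassoc (R := k) (A := H)).symm

theorem chunk1 :
    map (map (delta k H) (delta k H)) LinearMap.id ∘ₗ ttcMap k H
      = (TensorProduct.tensorTensorTensorComm k (H ⊗[k] H) H (H ⊗[k] H) H).toLinearMap ∘ₗ
          map (map (delta k H) LinearMap.id) (map (delta k H) LinearMap.id) := by
  ext a b c d
  simp [ttcMap]

theorem chunk2 :
    map LinearMap.id (map (delta k H) (delta k H)) ∘ₗ ttcMap k H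
      = (TensorProduct.tensorTensorTensorComm k H (H ⊗[k] H) H (H ⊗[k] H)).toLinearMap ∘ₗ
          map (map LinearMap.id (delta k H)) (map LinearMap.id (delta k H)) := by
  ext a b c d
  simp [ttcMap]

theorem structS :
    map (ttcMap k H) LinearMap.id ∘ₗ
        (TensorProduct.tensorTensorTensorComm k (H ⊗[k] H) H (H ⊗[k] H) H).toLinearMap
      = (TensorProduct.assoc k (H ⊗[k] H) (H ⊗[k] H) (H ⊗[k] H)).symm.toLinearMap ∘ₗ
          map LinearMap.id (ttcMap k H) ∘ₗ
          (TensorProduct.tensorTensorTensorComm k H (H ⊗[k] H) H (H ⊗[k] H)).toLinearMap ∘ₗ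
          map (TensorProduct.assoc k H H H).toLinearMap (TensorProduct.assoc k H H H).toLinearMap := by
  ext a b c d e f
  simp [ttcMap]

theorem dd_coassoc :
    map (dd k H) LinearMap.id ∘ₗ dd k H
      = (TensorProduct.assoc k (H ⊗[k] H) (H ⊗[k] H) (H ⊗[k] H)).symm.toLinearMap ∘ₗ
          map LinearMap.id (dd k H) ∘ₗ dd k H := by
  have hL : map (dd k H) LinearMap.id ∘ₗ dd k H
      = map (ttcMap k H) LinearMap.id ∘ₗ
          (TensorProduct.tensorTensorTensorComm k (H ⊗[k] H) H (H ⊗[k] H) H).toLinearMap ∘ₗ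
          map (map (delta k H) LinearMap.id ∘ₗ delta k H)
            (map (delta k H) LinearMap.id ∘ₗ delta k H) := by
    calc map (dd k H) LinearMap.id ∘ₗ dd k H
        = map (ttcMap k H ∘ₗ map (delta k H) (delta k H)) LinearMap.id ∘ₗ
            ttcMap k H ∘ₗ map (delta k H) (delta k H) := rfl
      _ = map (ttcMap k H) LinearMap.id ∘ₗ
            map (map (delta k H) (delta k H)) LinearMap.id ∘ₗ
            ttcMap k H ∘ₗ map (delta k H) (delta k H) := by
          rw [splitL, LinearMap.comp_assoc]
      _ = map (ttcMap k H) LinearMap.id ∘ₗ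
            (TensorProduct.tensorTensorTensorComm k (H ⊗[k] H) H (H ⊗[k] H) H).toLinearMap ∘ₗ
            map (map (delta k H) LinearMap.id) (map (delta k H) LinearMap.id) ∘ₗ
            map (delta k H) (delta k H) := by
          rw [crb (chunk1 (k := k) (H := H))]
      _ = _ := by
          rw [← TensorProduct.map_comp]
  have hR : map LinearMap.id (dd k H) ∘ₗ dd k H
      = map LinearMap.id (ttcMap k H) ∘ₗ
          (TensorProduct.tensorTensorTensorComm k H (H ⊗[k] H) H (H ⊗[k] H)).toLinearMap ∘ₗ
          map ((TensorProduct.assoc k H H H).toLinearMap ∘ₗ map (delta k H) LinearMap.id ∘ₗ delta k H)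
            ((TensorProduct.assoc k H H H).toLinearMap ∘ₗ map (delta k H) LinearMap.id ∘ₗ delta k H) := by
    calc map LinearMap.id (dd k H) ∘ₗ dd k H
        = map LinearMap.id (ttcMap k H ∘ₗ map (delta k H) (delta k H)) ∘ₗ
            ttcMap k H ∘ₗ map (delta k H) (delta k H) := rfl
      _ = map LinearMap.id (ttcMap k H) ∘ₗ
            map LinearMap.id (map (delta k H) (delta k H)) ∘ₗ
            ttcMap k H ∘ₗ map (delta k H) (delta k H) := by
          rw [splitR, LinearMap.comp_assoc]
      _ = map LinearMap.id (ttcMap k H) ∘ₗ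
            (TensorProduct.tensorTensorTensorComm k H (H ⊗[k] H) H (H ⊗[k] H)).toLinearMap ∘ₗ
            map (map LinearMap.id (delta k H)) (map LinearMap.id (delta k H)) ∘ₗ
            map (delta k H) (delta k H) := by
          rw [crb (chunk2 (k := k) (H := H))]
      _ = _ := by
          rw [← TensorProduct.map_comp, ← d3_eq, d3_eq]
  rw [hL, hR, TensorProduct.map_comp]
  rw [crb (structS (k := k) (H := H))]
  simp only [LinearMap.comp_assoc]
  rw [TensorProduct.map_comp, TensorProduct.map_comp]

end AuxStruct2
section AuxConv

variable {k H : Type*} [Field k] [Ring H] [HopfAlgebra k H]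

theorem splitA {M₁ M₂ M₃ N₁ N₂ : Type*} [AddCommMonoid M₁] [AddCommMonoid M₂] [AddCommMonoid M₃]
    [AddCommMonoid N₁] [AddCommMonoid N₂] [Module k M₁] [Module k M₂] [Module k M₃] [Module k N₁]
    [Module k N₂] (f₂ : M₂ →ₗ[k] M₃) (f₁ : M₁ →ₗ[k] M₂) (g : N₁ →ₗ[k] N₂) :
    map (f₂ ∘ₗ f₁) g = map f₂ LinearMap.id ∘ₗ map f₁ g := by
  rw [← TensorProduct.map_comp, LinearMap.id_comp]

theorem splitB {M₁ M₂ M₃ N₁ N₂ : Type*} [AddCommMonoid M₁] [AddCommMonoid M₂] [AddCommMonoid M₃]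
    [AddCommMonoid N₁] [AddCommMonoid N₂] [Module k M₁] [Module k M₂] [Module k M₃] [Module k N₁]
    [Module k N₂] (f₂ : M₂ →ₗ[k] M₃) (f₁ : M₁ →ₗ[k] M₂) (g : N₁ →ₗ[k] N₂) :
    map (f₂ ∘ₗ f₁) g = map f₂ g ∘ₗ map f₁ LinearMap.id := by
  rw [← TensorProduct.map_comp, LinearMap.comp_id]

theorem splitC {M₁ M₂ N₁ N₂ N₃ : Type*} [AddCommMonoid M₁] [AddCommMonoid M₂] [AddCommMonoid N₁]
    [AddCommMonoid N₂] [AddCommMonoid N₃] [Module k M₁] [Module k M₂] [Module k N₁] [Module k N₂]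
    [Module k N₃] (f : M₁ →ₗ[k] M₂) (g₂ : N₂ →ₗ[k] N₃) (g₁ : N₁ →ₗ[k] N₂) :
    map f (g₂ ∘ₗ g₁) = map LinearMap.id g₂ ∘ₗ map f g₁ := by
  rw [← TensorProduct.map_comp, LinearMap.id_comp]

theorem splitD {M₁ M₂ N₁ N₂ N₃ : Type*} [AddCommMonoid M₁] [AddCommMonoid M₂] [AddCommMonoid N₁]
    [AddCommMonoid N₂] [AddCommMonoid N₃] [Module k M₁] [Module k M₂] [Module k N₁] [Module k N₂]
    [Module k N₃] (f : M₁ →ₗ[k] M₂) (g₂ : N₂ →ₗ[k] N₃) (g₁ : N₁ →ₗ[k] N₂) :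
    map f (g₂ ∘ₗ g₁) = map f g₂ ∘ₗ map LinearMap.id g₁ := by
  rw [← TensorProduct.map_comp, LinearMap.comp_id]

theorem splitE {M₁ M₂ N₁ N₂ : Type*} [AddCommMonoid M₁] [AddCommMonoid M₂] [AddCommMonoid N₁]
    [AddCommMonoid N₂] [Module k M₁] [Module k M₂] [Module k N₁] [Module k N₂]
    (f : M₁ →ₗ[k] M₂) (g : N₁ →ₗ[k] N₂) :
    map f g = map LinearMap.id g ∘ₗ map f LinearMap.id := by
  rw [← TensorProduct.map_comp, LinearMap.comp_id, LinearMap.id_comp]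

theorem splitF {M₁ M₂ N₁ N₂ : Type*} [AddCommMonoid M₁] [AddCommMonoid M₂] [AddCommMonoid N₁]
    [AddCommMonoid N₂] [Module k M₁] [Module k M₂] [Module k N₁] [Module k N₂]
    (f : M₁ →ₗ[k] M₂) (g : N₁ →ₗ[k] N₂) :
    map f g = map f LinearMap.id ∘ₗ map LinearMap.id g := by
  rw [← TensorProduct.map_comp, LinearMap.comp_id, LinearMap.id_comp]

theorem chunk3 :
    map (map (eps k H) (eps k H)) LinearMap.id ∘ₗ ttcMap k H
      = (TensorProduct.tensorTensorTensorComm k k H k H).toLinearMap ∘ₗ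
          map (map (eps k H) LinearMap.id) (map (eps k H) LinearMap.id) := by
  ext a b c d
  simp [ttcMap]

theorem chunk4 :
    map LinearMap.id (map (eps k H) (eps k H)) ∘ₗ ttcMap k H
      = (TensorProduct.tensorTensorTensorComm k H k H k).toLinearMap ∘ₗ
          map (map LinearMap.id (eps k H)) (map LinearMap.id (eps k H)) := by
  ext a b c d
  simp [ttcMap]

theorem eps_rcounit : map (eps k H) LinearMap.id ∘ₗ delta k H = TensorProduct.mk k k H 1 :=
  Coalgebra.rTensor_counit_comp_comul

theorem eps_lcounit : map LinearMap.id (eps k H) ∘ₗ delta k H = (TensorProduct.mk k H k).flip 1 :=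
  Coalgebra.lTensor_counit_comp_comul

theorem dd_counitL :
    map (epseps k H) LinearMap.id ∘ₗ dd k H = TensorProduct.mk k k (H ⊗[k] H) 1 := by
  calc map (epseps k H) LinearMap.id ∘ₗ dd k H
      = map (LinearMap.mul' k k ∘ₗ map (eps k H) (eps k H)) LinearMap.id ∘ₗ
          ttcMap k H ∘ₗ map (delta k H) (delta k H) := rfl
    _ = map (LinearMap.mul' k k) LinearMap.id ∘ₗ
          map (map (eps k H) (eps k H)) LinearMap.id ∘ₗ
          ttcMap k H ∘ₗ map (delta k H) (delta k H) := by
        rw [splitA, LinearMap.comp_assoc]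
    _ = map (LinearMap.mul' k k) LinearMap.id ∘ₗ
          (TensorProduct.tensorTensorTensorComm k k H k H).toLinearMap ∘ₗ
          map (map (eps k H) LinearMap.id) (map (eps k H) LinearMap.id) ∘ₗ
          map (delta k H) (delta k H) := by
        rw [crb (chunk3 (k := k) (H := H))]
    _ = map (LinearMap.mul' k k) LinearMap.id ∘ₗ
          (TensorProduct.tensorTensorTensorComm k k H k H).toLinearMap ∘ₗ
          map (TensorProduct.mk k k H 1) (TensorProduct.mk k k H 1) := by
        rw [← TensorProduct.map_comp, eps_rcounit]
    _ = _ := by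
        ext a b
        simp

theorem dd_counitR :
    map LinearMap.id (epseps k H) ∘ₗ dd k H = (TensorProduct.mk k (H ⊗[k] H) k).flip 1 := by
  calc map LinearMap.id (epseps k H) ∘ₗ dd k H
      = map LinearMap.id (LinearMap.mul' k k ∘ₗ map (eps k H) (eps k H)) ∘ₗ
          ttcMap k H ∘ₗ map (delta k H) (delta k H) := rfl
    _ = map LinearMap.id (LinearMap.mul' k k) ∘ₗ
          map LinearMap.id (map (eps k H) (eps k H)) ∘ₗ
          ttcMap k H ∘ₗ map (delta k H) (delta k H) := by
        rw [splitC, LinearMap.comp_assoc]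
    _ = map LinearMap.id (LinearMap.mul' k k) ∘ₗ
          (TensorProduct.tensorTensorTensorComm k H k H k).toLinearMap ∘ₗ
          map (map LinearMap.id (eps k H)) (map LinearMap.id (eps k H)) ∘ₗ
          map (delta k H) (delta k H) := by
        rw [crb (chunk4 (k := k) (H := H))]
    _ = map LinearMap.id (LinearMap.mul' k k) ∘ₗ
          (TensorProduct.tensorTensorTensorComm k H k H k).toLinearMap ∘ₗ
          map ((TensorProduct.mk k H k).flip 1) ((TensorProduct.mk k H k).flip 1) := by
        rw [← TensorProduct.map_comp, eps_lcounit]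
    _ = _ := by
        ext a b
        simp

end AuxConv
section Conv

variable {k H : Type*} [Field k] [Ring H] [HopfAlgebra k H]
variable {A : Type*} [Ring A] [Algebra k A]

/-- Convolution product on maps from the coalgebra `H ⊗ H` to an algebra `A`. -/
def conv (f g : H ⊗[k] H →ₗ[k] A) : H ⊗[k] H →ₗ[k] A :=
  LinearMap.mul' k A ∘ₗ map f g ∘ₗ dd k H

/-- Convolution unit. -/
def cone : H ⊗[k] H →ₗ[k] A := Algebra.linearMap k A ∘ₗ epseps k H

theorem mulassoc2 :
    (LinearMap.mul' k A ∘ₗ map (LinearMap.mul' k A) LinearMap.id) ∘ₗ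
        (TensorProduct.assoc k A A A).symm.toLinearMap
      = LinearMap.mul' k A ∘ₗ map LinearMap.id (LinearMap.mul' k A) := by
  ext x y z
  simp [mul_assoc]

theorem conv_assoc (f g h : H ⊗[k] H →ₗ[k] A) :
    conv (conv f g) h = conv f (conv g h) := by
  calc conv (conv f g) h
      = LinearMap.mul' k A ∘ₗ
          map (LinearMap.mul' k A) LinearMap.id ∘ₗ
          map (map f g) h ∘ₗ
          map (dd k H) LinearMap.id ∘ₗ dd k H := by
        show LinearMap.mul' k A ∘ₗ map (LinearMap.mul' k A ∘ₗ map f g ∘ₗ dd k H) h ∘ₗ dd k H = _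
        rw [splitA, splitB]
        simp only [LinearMap.comp_assoc]
    _ = LinearMap.mul' k A ∘ₗ
          map (LinearMap.mul' k A) LinearMap.id ∘ₗ
          map (map f g) h ∘ₗ
          (TensorProduct.assoc k (H ⊗[k] H) (H ⊗[k] H) (H ⊗[k] H)).symm.toLinearMap ∘ₗ
          map LinearMap.id (dd k H) ∘ₗ dd k H := by
        rw [dd_coassoc]
    _ = LinearMap.mul' k A ∘ₗ
          map (LinearMap.mul' k A) LinearMap.id ∘ₗ
          (TensorProduct.assoc k A A A).symm.toLinearMap ∘ₗ
          map f (map g h) ∘ₗ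
          map LinearMap.id (dd k H) ∘ₗ dd k H := by
        rw [crb (TensorProduct.map_map_comp_assoc_symm_eq f g h)]
    _ = conv f (conv g h) := by
        show _ = LinearMap.mul' k A ∘ₗ map f (LinearMap.mul' k A ∘ₗ map g h ∘ₗ dd k H) ∘ₗ dd k H
        rw [splitC f (LinearMap.mul' k A), splitD f (map g h)]
        simp only [← LinearMap.comp_assoc]
        rw [mulassoc2]

theorem cone_conv (f : H ⊗[k] H →ₗ[k] A) : conv cone f = f := by
  calc conv cone f
      = LinearMap.mul' k A ∘ₗ
          map (Algebra.linearMap k A) LinearMap.id ∘ₗ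
          map LinearMap.id f ∘ₗ
          map (epseps k H) LinearMap.id ∘ₗ dd k H := by
        show LinearMap.mul' k A ∘ₗ map (Algebra.linearMap k A ∘ₗ epseps k H) f ∘ₗ dd k H = _
        rw [splitA, splitE (epseps k H) f]
        simp only [LinearMap.comp_assoc]
    _ = LinearMap.mul' k A ∘ₗ
          map (Algebra.linearMap k A) LinearMap.id ∘ₗ
          map LinearMap.id f ∘ₗ TensorProduct.mk k k (H ⊗[k] H) 1 := by
        rw [dd_counitL]
    _ = f := by
        ext a b
        simp

theorem conv_cone (f : H ⊗[k] H →ₗ[k] A) : conv f cone = f := by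
  calc conv f cone
      = LinearMap.mul' k A ∘ₗ
          map LinearMap.id (Algebra.linearMap k A) ∘ₗ
          map f LinearMap.id ∘ₗ
          map LinearMap.id (epseps k H) ∘ₗ dd k H := by
        show LinearMap.mul' k A ∘ₗ map f (Algebra.linearMap k A ∘ₗ epseps k H) ∘ₗ dd k H = _
        rw [splitC, splitF f (epseps k H)]
        simp only [LinearMap.comp_assoc]
    _ = LinearMap.mul' k A ∘ₗ
          map LinearMap.id (Algebra.linearMap k A) ∘ₗ
          map f LinearMap.id ∘ₗ (TensorProduct.mk k (H ⊗[k] H) k).flip 1 := by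
        rw [dd_counitR]
    _ = f := by
        ext a b
        simp

end Conv
section Transfer

variable {k H : Type*} [Field k] [Ring H] [HopfAlgebra k H]

/-- `a ↦ a ⊗ 1` as a linear map. -/
def inl : H →ₗ[k] H ⊗[k] H := Algebra.TensorProduct.includeLeft.toLinearMap

/-- `a ↦ 1 ⊗ a` as a linear map. -/
def inr : H →ₗ[k] H ⊗[k] H := Algebra.TensorProduct.includeRight.toLinearMap

theorem algHom_conv {A B : Type*} [Ring A] [Algebra k A] [Ring B] [Algebra k B] (φ : A →ₐ[k] B)
    (f g : H ⊗[k] H →ₗ[k] A) :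
    φ.toLinearMap ∘ₗ conv f g = conv (φ.toLinearMap ∘ₗ f) (φ.toLinearMap ∘ₗ g) := by
  have h1 : LinearMap.mul' k B ∘ₗ map φ.toLinearMap φ.toLinearMap
      = φ.toLinearMap ∘ₗ LinearMap.mul' k A := by
    ext x y; simp
  calc φ.toLinearMap ∘ₗ conv f g
      = (φ.toLinearMap ∘ₗ LinearMap.mul' k A) ∘ₗ map f g ∘ₗ dd k H := by
        simp only [conv, LinearMap.comp_assoc]
    _ = (LinearMap.mul' k B ∘ₗ map φ.toLinearMap φ.toLinearMap) ∘ₗ map f g ∘ₗ dd k H := by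
        rw [h1]
    _ = conv (φ.toLinearMap ∘ₗ f) (φ.toLinearMap ∘ₗ g) := by
        simp only [conv, TensorProduct.map_comp, LinearMap.comp_assoc]

theorem algHom_cone {A B : Type*} [Ring A] [Algebra k A] [Ring B] [Algebra k B] (φ : A →ₐ[k] B) :
    φ.toLinearMap ∘ₗ (cone : H ⊗[k] H →ₗ[k] A) = cone := by
  show φ.toLinearMap ∘ₗ Algebra.linearMap k A ∘ₗ epseps k H = Algebra.linearMap k B ∘ₗ epseps k H
  rw [← LinearMap.comp_assoc]
  congr 1
  ext c
  simp

theorem conv_anti_left (h : H ⊗[k] H →ₗ[k] H)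
    (h1 : delta k H ∘ₗ h = map h h ∘ₗ dd k H) (h2 : eps k H ∘ₗ h = epseps k H) :
    conv (anti k H ∘ₗ h) h = (cone : H ⊗[k] H →ₗ[k] H) := by
  have hh : (LinearMap.mul' k H ∘ₗ map (anti k H) LinearMap.id) ∘ₗ delta k H
      = Algebra.linearMap k H ∘ₗ eps k H := by
    rw [LinearMap.comp_assoc]
    exact HopfAlgebra.mul_antipode_rTensor_comul (R := k) (A := H)
  calc conv (anti k H ∘ₗ h) h
      = LinearMap.mul' k H ∘ₗ map (anti k H) LinearMap.id ∘ₗ map h h ∘ₗ dd k H := by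
        show LinearMap.mul' k H ∘ₗ map (anti k H ∘ₗ h) h ∘ₗ dd k H = _
        rw [splitA]
        simp only [LinearMap.comp_assoc]
    _ = LinearMap.mul' k H ∘ₗ map (anti k H) LinearMap.id ∘ₗ delta k H ∘ₗ h := by
        rw [← h1]
    _ = (cone : H ⊗[k] H →ₗ[k] H) := by
        simp only [← LinearMap.comp_assoc]
        rw [hh]
        show (Algebra.linearMap k H) ∘ₗ (eps k H ∘ₗ h) = _
        rw [h2]
        rfl

theorem conv_anti_right (h : H ⊗[k] H →ₗ[k] H)
    (h1 : delta k H ∘ₗ h = map h h ∘ₗ dd k H) (h2 : eps k H ∘ₗ h = epseps k H) :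
    conv h (anti k H ∘ₗ h) = (cone : H ⊗[k] H →ₗ[k] H) := by
  have hh : (LinearMap.mul' k H ∘ₗ map LinearMap.id (anti k H)) ∘ₗ delta k H
      = Algebra.linearMap k H ∘ₗ eps k H := by
    rw [LinearMap.comp_assoc]
    exact HopfAlgebra.mul_antipode_lTensor_comul (R := k) (A := H)
  calc conv h (anti k H ∘ₗ h)
      = LinearMap.mul' k H ∘ₗ map LinearMap.id (anti k H) ∘ₗ map h h ∘ₗ dd k H := by
        show LinearMap.mul' k H ∘ₗ map h (anti k H ∘ₗ h) ∘ₗ dd k H = _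
        rw [splitC]
        simp only [LinearMap.comp_assoc]
    _ = LinearMap.mul' k H ∘ₗ map LinearMap.id (anti k H) ∘ₗ delta k H ∘ₗ h := by
        rw [← h1]
    _ = (cone : H ⊗[k] H →ₗ[k] H) := by
        simp only [← LinearMap.comp_assoc]
        rw [hh]
        show (Algebra.linearMap k H) ∘ₗ (eps k H ∘ₗ h) = _
        rw [h2]
        rfl

theorem delta_mu : delta k H ∘ₗ mu k H
    = LinearMap.mul' k (H ⊗[k] H) ∘ₗ map (delta k H) (delta k H) := by
  ext a b
  simp [delta, mu]

theorem mu_ttc : map (mu k H) (mu k H) ∘ₗ ttcMap k H = LinearMap.mul' k (H ⊗[k] H) := by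
  ext a b c d
  simp [ttcMap, mu, Algebra.TensorProduct.tmul_mul_tmul]

theorem delta_mu' : delta k H ∘ₗ mu k H = map (mu k H) (mu k H) ∘ₗ dd k H := by
  show _ = map (mu k H) (mu k H) ∘ₗ ttcMap k H ∘ₗ map (delta k H) (delta k H)
  rw [cra (mu_ttc (k := k) (H := H)), delta_mu]

theorem eps_mu : eps k H ∘ₗ mu k H = epseps k H := by
  ext a b
  simp [eps, mu, epseps]

theorem conv_delta (f g : H ⊗[k] H →ₗ[k] H) :
    conv (delta k H ∘ₗ f) (delta k H ∘ₗ g) = delta k H ∘ₗ conv f g := by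
  calc conv (delta k H ∘ₗ f) (delta k H ∘ₗ g)
      = LinearMap.mul' k (H ⊗[k] H) ∘ₗ map (delta k H) (delta k H) ∘ₗ map f g ∘ₗ dd k H := by
        show LinearMap.mul' k (H ⊗[k] H) ∘ₗ map (delta k H ∘ₗ f) (delta k H ∘ₗ g) ∘ₗ dd k H = _
        rw [TensorProduct.map_comp]
        simp only [LinearMap.comp_assoc]
    _ = delta k H ∘ₗ conv f g := by
        simp only [← LinearMap.comp_assoc]
        rw [← delta_mu]
        show (delta k H ∘ₗ mu k H) ∘ₗ map f g ∘ₗ dd k H = _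
        simp only [conv, mu, LinearMap.comp_assoc]

theorem mulE_inl_inr :
    LinearMap.mul' k (H ⊗[k] H) ∘ₗ map (inl : H →ₗ[k] H ⊗[k] H) inr = LinearMap.id := by
  ext a b
  simp [inl, inr, Algebra.TensorProduct.tmul_mul_tmul]

theorem mulE_inr_inl :
    LinearMap.mul' k (H ⊗[k] H) ∘ₗ map (inr : H →ₗ[k] H ⊗[k] H) inl = tau k H := by
  ext a b
  simp [inl, inr, tau, Algebra.TensorProduct.tmul_mul_tmul]

theorem mulE_id_inr :
    LinearMap.mul' k (H ⊗[k] H) ∘ₗ map LinearMap.id (inr : H →ₗ[k] H ⊗[k] H)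
      = map LinearMap.id (mu k H) ∘ₗ assocMap k H := by
  ext a b c
  simp [inr, mu, assocMap, Algebra.TensorProduct.tmul_mul_tmul]

theorem transT1 (f g : H ⊗[k] H →ₗ[k] H) :
    conv ((inl : H →ₗ[k] H ⊗[k] H) ∘ₗ f) (inr ∘ₗ g) = map f g ∘ₗ dd k H := by
  show LinearMap.mul' k (H ⊗[k] H) ∘ₗ map (inl ∘ₗ f) (inr ∘ₗ g) ∘ₗ dd k H = _
  rw [TensorProduct.map_comp]
  simp only [← LinearMap.comp_assoc]
  rw [mulE_inl_inr]
  simp only [LinearMap.comp_assoc, LinearMap.id_comp]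

theorem transT2 (f g : H ⊗[k] H →ₗ[k] H) :
    conv ((inr : H →ₗ[k] H ⊗[k] H) ∘ₗ f) (inl ∘ₗ g) = tau k H ∘ₗ map f g ∘ₗ dd k H := by
  show LinearMap.mul' k (H ⊗[k] H) ∘ₗ map (inr ∘ₗ f) (inl ∘ₗ g) ∘ₗ dd k H = _
  rw [TensorProduct.map_comp]
  simp only [← LinearMap.comp_assoc]
  rw [mulE_inr_inl]
  try simp only [LinearMap.comp_assoc]

theorem transT3 (F : H ⊗[k] H →ₗ[k] H ⊗[k] H) (g : H ⊗[k] H →ₗ[k] H) :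
    conv F ((inr : H →ₗ[k] H ⊗[k] H) ∘ₗ g)
      = map LinearMap.id (mu k H) ∘ₗ assocMap k H ∘ₗ map F g ∘ₗ dd k H := by
  show LinearMap.mul' k (H ⊗[k] H) ∘ₗ map F (inr ∘ₗ g) ∘ₗ dd k H = _
  rw [splitC]
  simp only [← LinearMap.comp_assoc]
  rw [mulE_id_inr]
  try simp only [LinearMap.comp_assoc]

theorem tau_conv (f g : H ⊗[k] H →ₗ[k] H ⊗[k] H) :
    tau k H ∘ₗ conv f g = conv (tau k H ∘ₗ f) (tau k H ∘ₗ g) :=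
  algHom_conv (Algebra.TensorProduct.comm k H H).toAlgHom f g

theorem tau_inl (f : H ⊗[k] H →ₗ[k] H) :
    tau k H ∘ₗ ((inl : H →ₗ[k] H ⊗[k] H) ∘ₗ f) = inr ∘ₗ f := by
  rw [← LinearMap.comp_assoc]
  congr 1
  all_goals try (ext a; simp [tau, inl, inr])

theorem tau_inr (f : H ⊗[k] H →ₗ[k] H) :
    tau k H ∘ₗ ((inr : H →ₗ[k] H ⊗[k] H) ∘ₗ f) = inl ∘ₗ f := by
  rw [← LinearMap.comp_assoc]
  congr 1
  all_goals try (ext a; simp [tau, inl, inr])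

theorem tau_inj {f g : H ⊗[k] H →ₗ[k] H ⊗[k] H} (h : tau k H ∘ₗ f = tau k H ∘ₗ g) : f = g := by
  have := congrArg (fun t => tau k H ∘ₗ t) h
  simpa [← LinearMap.comp_assoc, show tau k H ∘ₗ tau k H = LinearMap.id from by ext a b; simp [tau]]
    using this

theorem conv_cancel_left {A : Type*} [Ring A] [Algebra k A] {x x' a b : H ⊗[k] H →ₗ[k] A}
    (hx : conv x' x = cone) (h : conv x a = conv x b) : a = b := by
  have h2 : conv x' (conv x a) = conv x' (conv x b) := by rw [h]
  rwa [← conv_assoc, ← conv_assoc, hx, cone_conv, cone_conv] at h2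

theorem conv_cancel_right {A : Type*} [Ring A] [Algebra k A] {x x' a b : H ⊗[k] H →ₗ[k] A}
    (hx : conv x x' = cone) (h : conv a x = conv b x) : a = b := by
  have h2 : conv (conv a x) x' = conv (conv b x) x' := by rw [h]
  rwa [conv_assoc, conv_assoc, hx, conv_cone, conv_cone] at h2

end Transfer
section Main
set_option maxHeartbeats 400000

variable {k H : Type*} [Field k] [Ring H] [HopfAlgebra k H]

theorem transfer_inv {A B : Type*} [Ring A] [Algebra k A] [Ring B] [Algebra k B] (φ : A →ₐ[k] B)
    {x y : H ⊗[k] H →ₗ[k] A} (h : conv x y = cone) :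
    conv (φ.toLinearMap ∘ₗ x) (φ.toLinearMap ∘ₗ y) = cone := by
  rw [← algHom_conv, h, algHom_cone]

variable (l r : H ⊗[k] H →ₗ[k] H)

theorem star_conv (hstar : mu k H ∘ₗ sig k H l r = mu k H) : conv l r = mu k H := hstar

theorem cstarL (hstar : mu k H ∘ₗ sig k H l r = mu k H) :
    conv ((inl : H →ₗ[k] H ⊗[k] H) ∘ₗ l) (inl ∘ₗ r) = inl ∘ₗ mu k H := by
  have h := algHom_conv (Algebra.TensorProduct.includeLeft : H →ₐ[k] H ⊗[k] H) l r
  rw [star_conv l r hstar] at h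
  exact h.symm

theorem cstarR (hstar : mu k H ∘ₗ sig k H l r = mu k H) :
    conv ((inr : H →ₗ[k] H ⊗[k] H) ∘ₗ l) (inr ∘ₗ r) = inr ∘ₗ mu k H := by
  have h := algHom_conv (Algebra.TensorProduct.includeRight : H →ₐ[k] H ⊗[k] H) l r
  rw [star_conv l r hstar] at h
  exact h.symm

section WithL

variable (hcomul_l : delta k H ∘ₗ l = map l l ∘ₗ dd k H)
  (hcounit_l : eps k H ∘ₗ l = epseps k H)
  (hstar : mu k H ∘ₗ sig k H l r = mu k H)

include hcomul_l hcounit_l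

theorem invL1 : conv ((inl : H →ₗ[k] H ⊗[k] H) ∘ₗ (anti k H ∘ₗ l)) (inl ∘ₗ l) = cone :=
  transfer_inv (Algebra.TensorProduct.includeLeft : H →ₐ[k] H ⊗[k] H)
    (conv_anti_left l hcomul_l hcounit_l)

theorem invR1 : conv ((inr : H →ₗ[k] H ⊗[k] H) ∘ₗ (anti k H ∘ₗ l)) (inr ∘ₗ l) = cone :=
  transfer_inv (Algebra.TensorProduct.includeRight : H →ₐ[k] H ⊗[k] H)
    (conv_anti_left l hcomul_l hcounit_l)

theorem invR2 : conv ((inr : H →ₗ[k] H ⊗[k] H) ∘ₗ l) (inr ∘ₗ (anti k H ∘ₗ l)) = cone :=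
  transfer_inv (Algebra.TensorProduct.includeRight : H →ₐ[k] H ⊗[k] H)
    (conv_anti_right l hcomul_l hcounit_l)

end WithL

theorem invMuR1 : conv ((inr : H →ₗ[k] H ⊗[k] H) ∘ₗ (anti k H ∘ₗ mu k H)) (inr ∘ₗ mu k H)
    = cone :=
  transfer_inv (Algebra.TensorProduct.includeRight : H →ₐ[k] H ⊗[k] H)
    (conv_anti_left (mu k H) delta_mu' eps_mu)

theorem invMuR2 : conv ((inr : H →ₗ[k] H ⊗[k] H) ∘ₗ mu k H) (inr ∘ₗ (anti k H ∘ₗ mu k H))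
    = cone :=
  transfer_inv (Algebra.TensorProduct.includeRight : H →ₐ[k] H ⊗[k] H)
    (conv_anti_right (mu k H) delta_mu' eps_mu)

/-- The right factor `a⊗b ↦ 1 ⊗ (a₂↼b₂)` is convolution invertible. -/
theorem de_inv (hcomul_l : delta k H ∘ₗ l = map l l ∘ₗ dd k H)
    (hcounit_l : eps k H ∘ₗ l = epseps k H)
    (hstar : mu k H ∘ₗ sig k H l r = mu k H) :
    conv ((inr : H →ₗ[k] H ⊗[k] H) ∘ₗ r)
      (conv ((inr : H →ₗ[k] H ⊗[k] H) ∘ₗ (anti k H ∘ₗ mu k H)) (inr ∘ₗ l)) = cone := by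
  have hde : ((inr : H →ₗ[k] H ⊗[k] H) ∘ₗ r)
      = conv (inr ∘ₗ (anti k H ∘ₗ l)) (inr ∘ₗ mu k H) := by
    have h2 := congrArg (conv ((inr : H →ₗ[k] H ⊗[k] H) ∘ₗ (anti k H ∘ₗ l)))
      (cstarR l r hstar)
    rwa [← conv_assoc, invR1 l hcomul_l hcounit_l, cone_conv] at h2
  rw [hde, conv_assoc, ← conv_assoc (inr ∘ₗ mu k H), invMuR2, cone_conv,
    invR1 l hcomul_l hcounit_l]

/-- Master equation: `(α⋆β)⋆(Δ∘r) = (α⋆γ)⋆(β⋆δ)`. -/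
theorem masterE (hcomul_l : delta k H ∘ₗ l = map l l ∘ₗ dd k H)
    (hstar : mu k H ∘ₗ sig k H l r = mu k H) :
    conv (conv ((inl : H →ₗ[k] H ⊗[k] H) ∘ₗ l) (inr ∘ₗ l)) (delta k H ∘ₗ r)
      = conv (conv ((inl : H →ₗ[k] H ⊗[k] H) ∘ₗ l) (inl ∘ₗ r))
          (conv ((inr : H →ₗ[k] H ⊗[k] H) ∘ₗ l) (inr ∘ₗ r)) := by
  calc conv (conv ((inl : H →ₗ[k] H ⊗[k] H) ∘ₗ l) (inr ∘ₗ l)) (delta k H ∘ₗ r)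
      = conv (delta k H ∘ₗ l) (delta k H ∘ₗ r) := by
        rw [hcomul_l, ← transT1]
    _ = delta k H ∘ₗ conv l r := conv_delta l r
    _ = delta k H ∘ₗ mu k H := by rw [star_conv l r hstar]
    _ = conv ((inl : H →ₗ[k] H ⊗[k] H) ∘ₗ mu k H) (inr ∘ₗ mu k H) := by
        rw [delta_mu', ← transT1]
    _ = _ := by rw [← cstarL l r hstar, ← cstarR l r hstar]

end Main
section Final

set_option maxHeartbeats 1000000

variable {k H : Type*} [Field k] [Ring H] [HopfAlgebra k H]
variable (l r : H ⊗[k] H →ₗ[k] H)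

theorem tau_tau_cancel (X : H ⊗[k] H →ₗ[k] H ⊗[k] H) :
    tau k H ∘ₗ (tau k H ∘ₗ X) = X := by
  rw [← LinearMap.comp_assoc]
  rw [show tau k H ∘ₗ tau k H = LinearMap.id from by ext a b; simp [tau]]
  rw [LinearMap.id_comp]

theorem trans_ii :
    conv (conv ((inr : H →ₗ[k] H ⊗[k] H) ∘ₗ l) (inl ∘ₗ r)) (inr ∘ₗ r)
      = map LinearMap.id (mu k H) ∘ₗ assocMap k H ∘ₗ map (tau k H) LinearMap.id ∘ₗ
          map (map l r) r ∘ₗ ddd k H := by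
  rw [transT3, transT2]
  rw [splitA (tau k H) (map l r ∘ₗ dd k H) r]
  rw [splitB (map l r) (dd k H) r]
  simp only [LinearMap.comp_assoc]
  rfl

theorem trans_iii :
    conv (conv ((inr : H →ₗ[k] H ⊗[k] H) ∘ₗ l) (inl ∘ₗ l)) (inr ∘ₗ r)
      = map LinearMap.id (mu k H) ∘ₗ assocMap k H ∘ₗ map (tau k H) LinearMap.id ∘ₗ
          map (map l l) r ∘ₗ ddd k H := by
  rw [transT3, transT2]
  rw [splitA (tau k H) (map l l ∘ₗ dd k H) r]
  rw [splitB (map l l) (dd k H) r]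
  simp only [LinearMap.comp_assoc]
  rfl

theorem iff_iv :
    (map l r ∘ₗ dd k H = tau k H ∘ₗ map r l ∘ₗ dd k H)
      ↔ (conv ((inl : H →ₗ[k] H ⊗[k] H) ∘ₗ l) (inr ∘ₗ r)
          = conv ((inr : H →ₗ[k] H ⊗[k] H) ∘ₗ r) (inl ∘ₗ l)) := by
  rw [← transT1 l r, ← transT2 r l]

theorem P_iff_Q :
    (conv ((inr : H →ₗ[k] H ⊗[k] H) ∘ₗ l) (inl ∘ₗ r)
        = conv ((inl : H →ₗ[k] H ⊗[k] H) ∘ₗ r) (inr ∘ₗ l))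
      ↔ (conv ((inl : H →ₗ[k] H ⊗[k] H) ∘ₗ l) (inr ∘ₗ r)
          = conv ((inr : H →ₗ[k] H ⊗[k] H) ∘ₗ r) (inl ∘ₗ l)) := by
  constructor
  · intro h
    have h2 := congrArg (fun t => tau k H ∘ₗ t) h
    simp only [tau_conv, tau_inl, tau_inr] at h2
    exact h2
  · intro h
    have h2 := congrArg (fun t => tau k H ∘ₗ t) h
    simp only [tau_conv, tau_inl, tau_inr] at h2
    exact h2

variable (hcomul_l : delta k H ∘ₗ l = map l l ∘ₗ dd k H)
  (hcounit_l : eps k H ∘ₗ l = epseps k H)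
  (hstar : mu k H ∘ₗ sig k H l r = mu k H)

include hcomul_l hcounit_l hstar

theorem iff_i :
    (delta k H ∘ₗ r = map r r ∘ₗ dd k H)
      ↔ (conv ((inr : H →ₗ[k] H ⊗[k] H) ∘ₗ l) (inl ∘ₗ r)
          = conv ((inl : H →ₗ[k] H ⊗[k] H) ∘ₗ r) (inr ∘ₗ l)) := by
  rw [← transT1 r r]
  constructor
  · intro h
    have hE := masterE l r hcomul_l hstar
    rw [h, conv_assoc, conv_assoc] at hE
    have h3 := conv_cancel_left (invL1 l hcomul_l hcounit_l) hE
    rw [← conv_assoc, ← conv_assoc] at h3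
    exact conv_cancel_right (de_inv l r hcomul_l hcounit_l hstar) h3
  · intro hP
    have hE := masterE l r hcomul_l hstar
    have h4 : conv (conv ((inl : H →ₗ[k] H ⊗[k] H) ∘ₗ l) ((inr : H →ₗ[k] H ⊗[k] H) ∘ₗ l))
          (conv ((inl : H →ₗ[k] H ⊗[k] H) ∘ₗ r) ((inr : H →ₗ[k] H ⊗[k] H) ∘ₗ r))
        = conv (conv ((inl : H →ₗ[k] H ⊗[k] H) ∘ₗ l) ((inl : H →ₗ[k] H ⊗[k] H) ∘ₗ r))
            (conv ((inr : H →ₗ[k] H ⊗[k] H) ∘ₗ l) ((inr : H →ₗ[k] H ⊗[k] H) ∘ₗ r)) := by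
      calc conv (conv ((inl : H →ₗ[k] H ⊗[k] H) ∘ₗ l) ((inr : H →ₗ[k] H ⊗[k] H) ∘ₗ l))
            (conv ((inl : H →ₗ[k] H ⊗[k] H) ∘ₗ r) ((inr : H →ₗ[k] H ⊗[k] H) ∘ₗ r))
          = conv ((inl : H →ₗ[k] H ⊗[k] H) ∘ₗ l)
              (conv (conv ((inr : H →ₗ[k] H ⊗[k] H) ∘ₗ l) ((inl : H →ₗ[k] H ⊗[k] H) ∘ₗ r))
                ((inr : H →ₗ[k] H ⊗[k] H) ∘ₗ r)) := by
            rw [conv_assoc, conv_assoc]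
        _ = conv ((inl : H →ₗ[k] H ⊗[k] H) ∘ₗ l)
              (conv (conv ((inl : H →ₗ[k] H ⊗[k] H) ∘ₗ r) ((inr : H →ₗ[k] H ⊗[k] H) ∘ₗ l))
                ((inr : H →ₗ[k] H ⊗[k] H) ∘ₗ r)) := by
            rw [hP]
        _ = conv (conv ((inl : H →ₗ[k] H ⊗[k] H) ∘ₗ l) ((inl : H →ₗ[k] H ⊗[k] H) ∘ₗ r))
              (conv ((inr : H →ₗ[k] H ⊗[k] H) ∘ₗ l) ((inr : H →ₗ[k] H ⊗[k] H) ∘ₗ r)) := by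
            rw [conv_assoc, conv_assoc]
    have h5 := hE.trans h4.symm
    rw [conv_assoc, conv_assoc] at h5
    have h6 := conv_cancel_left (invL1 l hcomul_l hcounit_l) h5
    exact conv_cancel_left (invR1 l hcomul_l hcounit_l) h6

theorem iff_ii :
    (map LinearMap.id (mu k H) ∘ₗ assocMap k H ∘ₗ map (tau k H) LinearMap.id ∘ₗ
        map (map l r) r ∘ₗ ddd k H = map r (mu k H) ∘ₗ dd k H)
      ↔ (conv ((inr : H →ₗ[k] H ⊗[k] H) ∘ₗ l) (inl ∘ₗ r)
          = conv ((inl : H →ₗ[k] H ⊗[k] H) ∘ₗ r) (inr ∘ₗ l)) := by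
  rw [← trans_ii l r, ← transT1 r (mu k H)]
  constructor
  · intro h
    have h2 : conv (conv ((inr : H →ₗ[k] H ⊗[k] H) ∘ₗ l) (inl ∘ₗ r)) (inr ∘ₗ r)
        = conv (conv ((inl : H →ₗ[k] H ⊗[k] H) ∘ₗ r) (inr ∘ₗ l)) (inr ∘ₗ r) := by
      rw [h, ← cstarR l r hstar, ← conv_assoc]
    exact conv_cancel_right (de_inv l r hcomul_l hcounit_l hstar) h2
  · intro hP
    rw [hP, conv_assoc, cstarR l r hstar]

theorem iff_iii :
    (tau k H ∘ₗ map LinearMap.id (mu k H) ∘ₗ assocMap k H ∘ₗ map (tau k H) LinearMap.id ∘ₗ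
        map (map l l) r ∘ₗ ddd k H = map (mu k H) l ∘ₗ dd k H)
      ↔ (conv ((inl : H →ₗ[k] H ⊗[k] H) ∘ₗ l) (inr ∘ₗ r)
          = conv ((inr : H →ₗ[k] H ⊗[k] H) ∘ₗ r) (inl ∘ₗ l)) := by
  rw [← trans_iii l r, ← transT1 (mu k H) l]
  constructor
  · intro h
    have h1 : conv (conv ((inr : H →ₗ[k] H ⊗[k] H) ∘ₗ l) (inl ∘ₗ l)) (inr ∘ₗ r)
        = conv ((inr : H →ₗ[k] H ⊗[k] H) ∘ₗ mu k H) (inl ∘ₗ l) := by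
      have h2 := congrArg (fun t => tau k H ∘ₗ t) h
      simp only [tau_tau_cancel, tau_conv, tau_inl, tau_inr] at h2
      exact h2
    rw [← cstarR l r hstar, conv_assoc, conv_assoc] at h1
    exact conv_cancel_left (invR1 l hcomul_l hcounit_l) h1
  · intro hQ
    have hX : conv (conv ((inr : H →ₗ[k] H ⊗[k] H) ∘ₗ l) (inl ∘ₗ l)) (inr ∘ₗ r)
        = conv ((inr : H →ₗ[k] H ⊗[k] H) ∘ₗ mu k H) (inl ∘ₗ l) := by
      rw [← cstarR l r hstar, conv_assoc, conv_assoc, hQ]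
    rw [hX, tau_conv, tau_inr, tau_inl]

end Final

/-- Lemma 3.5: let `l = ⇀` be a coalgebra morphism, `r = ↼` a linear map with
`ε(a↼b) = ε(a)ε(b)`, such that `a•b = (a₁⇀b₁)•(a₂↼b₂)`.  Then the following are
equivalent: (i) `r` is a coalgebra morphism; (ii) `(a₂↼b₂)⊗((a₁⇀b₁)•(a₃↼b₃)) =
(a₁↼b₁)⊗(a₂•b₂)`; (iii) `((a₁⇀b₁)•(a₃↼b₃))⊗(a₂⇀b₂) = (a₁•b₁)⊗(a₂⇀b₂)`;
(iv) `(a₁⇀b₁)⊗(a₂↼b₂) = (a₂⇀b₂)⊗(a₁↼b₁)`. -/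
theorem equiv_conditions_colinearity (l r : H ⊗[k] H →ₗ[k] H)
    (hcomul_l : delta k H ∘ₗ l = map l l ∘ₗ dd k H)
    (hcounit_l : eps k H ∘ₗ l = epseps k H)
    (hcounit_r : eps k H ∘ₗ r = epseps k H)
    (hstar : mu k H ∘ₗ sig k H l r = mu k H) :
    ((delta k H ∘ₗ r = map r r ∘ₗ dd k H) ↔
      (map LinearMap.id (mu k H) ∘ₗ assocMap k H ∘ₗ map (tau k H) LinearMap.id ∘ₗ
          map (map l r) r ∘ₗ ddd k H
        = map r (mu k H) ∘ₗ dd k H)) ∧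
    ((map LinearMap.id (mu k H) ∘ₗ assocMap k H ∘ₗ map (tau k H) LinearMap.id ∘ₗ
          map (map l r) r ∘ₗ ddd k H
        = map r (mu k H) ∘ₗ dd k H) ↔
      (tau k H ∘ₗ map LinearMap.id (mu k H) ∘ₗ assocMap k H ∘ₗ map (tau k H) LinearMap.id ∘ₗ
          map (map l l) r ∘ₗ ddd k H
        = map (mu k H) l ∘ₗ dd k H)) ∧
    ((tau k H ∘ₗ map LinearMap.id (mu k H) ∘ₗ assocMap k H ∘ₗ map (tau k H) LinearMap.id ∘ₗ
          map (map l l) r ∘ₗ ddd k H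
        = map (mu k H) l ∘ₗ dd k H) ↔
      (map l r ∘ₗ dd k H = tau k H ∘ₗ map r l ∘ₗ dd k H)) := by
  refine ⟨(iff_i l r hcomul_l hcounit_l hstar).trans
      (iff_ii l r hcomul_l hcounit_l hstar).symm,
    (iff_ii l r hcomul_l hcounit_l hstar).trans
      ((P_iff_Q l r).trans (iff_iii l r hcomul_l hcounit_l hstar).symm),
    (iff_iii l r hcomul_l hcounit_l hstar).trans (iff_iv l r).symm⟩

end
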